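/- arXiv:1901.05179 — 2 statements merged into one kernel-verified Lean document; each statement's English description precedes it below -/
import Mathlib

section
/- Every extreme point of the polytope P̂ = {P ∈ ℝ^{n×n} : P_{ij} ≥ 0, P 1 = 1, Pᵀ 1 = 1} of doubly stochastic matrices is a permutation matrix (Birkhoff–von Neumann). -/
open Matrix

theorem stmt_11 (n : ℕ) (P : Matrix (Fin n) (Fin n) ℝ)
    (hP : P ∈ Set.extremePoints ℝ
      {Q : Matrix (Fin n) (Fin n) ℝ | (∀ i j, 0 ≤ Q i j) ∧
        (∀ i, ∑ j, Q i j = 1) ∧ (∀ j, ∑ i, Q i j = 1)}) :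
    ∃ σ : Equiv.Perm (Fin n), P = σ.permMatrix ℝ := by
  have hset : {Q : Matrix (Fin n) (Fin n) ℝ | (∀ i j, 0 ≤ Q i j) ∧
      (∀ i, ∑ j, Q i j = 1) ∧ (∀ j, ∑ i, Q i j = 1)}
      = (doublyStochastic ℝ (Fin n) : Set (Matrix (Fin n) (Fin n) ℝ)) := by
    ext Q
    simp [mem_doublyStochastic_iff_sum]
  rw [hset] at hP
  rw [show (doublyStochastic ℝ (Fin n) : Set (Matrix (Fin n) (Fin n) ℝ))
      = convexHull ℝ {σ.permMatrix ℝ | σ : Equiv.Perm (Fin n)} by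
    rw [doublyStochastic_eq_convexHull_permMatrix]] at hP
  obtain ⟨σ, hσ⟩ := extremePoints_convexHull_subset hP
  exact ⟨σ, hσ.symm⟩
end

section
/- (Orthogonal Procrustes) For matrices X, Y ∈ ℝ^{m×d}, the maximum of tr(Rᵀ XᵀY) over orthogonal matrices R ∈ O(d) is attained at R = U Vᵀ, where XᵀY = U Σ Vᵀ is a singular value decomposition, and the maximum value is the sum of the singular values of XᵀY. -/
open Matrix

theorem stmt_17 (m d : ℕ)
    (X Y : Matrix (Fin m) (Fin d) ℝ)
    (U V Sig : Matrix (Fin d) (Fin d) ℝ)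
    (hU : Uᵀ * U = 1) (hV : Vᵀ * V = 1)
    (hSig : ∀ i j, i ≠ j → Sig i j = 0) (hSigpos : ∀ i, 0 ≤ Sig i i)
    (hSVD : Xᵀ * Y = U * Sig * Vᵀ) :
    ((U * Vᵀ)ᵀ * (U * Vᵀ) = 1) ∧
    (∀ R : Matrix (Fin d) (Fin d) ℝ, Rᵀ * R = 1 →
      Matrix.trace (Rᵀ * (Xᵀ * Y)) ≤ Matrix.trace ((U * Vᵀ)ᵀ * (Xᵀ * Y))) ∧
    Matrix.trace ((U * Vᵀ)ᵀ * (Xᵀ * Y)) = ∑ i, Sig i i := by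
  have hUU : U * Uᵀ = 1 := mul_eq_one_comm.mp hU
  have hVV : V * Vᵀ = 1 := mul_eq_one_comm.mp hV
  have hpart1 : (U * Vᵀ)ᵀ * (U * Vᵀ) = 1 := by
    have : (U * Vᵀ)ᵀ * (U * Vᵀ) = V * (Uᵀ * U) * Vᵀ := by
      simp [Matrix.transpose_mul, Matrix.mul_assoc]
    rw [this, hU, Matrix.mul_one, hVV]
  have hpart3 : Matrix.trace ((U * Vᵀ)ᵀ * (Xᵀ * Y)) = ∑ i, Sig i i := by
    rw [hSVD]
    have : (U * Vᵀ)ᵀ * (U * Sig * Vᵀ) = V * Sig * Vᵀ := by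
      have : (U * Vᵀ)ᵀ * (U * Sig * Vᵀ) = V * ((Uᵀ * U) * Sig) * Vᵀ := by
        simp [Matrix.transpose_mul, Matrix.mul_assoc]
      rw [this, hU, Matrix.one_mul]
    rw [this, Matrix.trace_mul_comm, ← Matrix.mul_assoc, hV, Matrix.one_mul,
      Matrix.trace]
    rfl
  refine ⟨hpart1, ?_, hpart3⟩
  intro R hR
  have hRR : R * Rᵀ = 1 := mul_eq_one_comm.mp hR
  set A := Vᵀ * Rᵀ * U with hA
  have hAtA : Aᵀ * A = 1 := by
    have : Aᵀ * A = Uᵀ * (R * (V * Vᵀ) * Rᵀ) * U := by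
      simp [hA, Matrix.transpose_mul, Matrix.mul_assoc]
    rw [this, hVV, Matrix.mul_one, hRR, Matrix.mul_one, hU]
  have hAle : ∀ i, A i i ≤ 1 := by
    intro i
    have h1 : ∑ k, A k i ^ 2 = 1 := by
      have := congrFun (congrFun hAtA i) i
      simpa [Matrix.mul_apply, Matrix.one_apply, sq] using this
    have h2 : A i i ^ 2 ≤ 1 := by
      rw [← h1]
      exact Finset.single_le_sum (fun k _ => sq_nonneg (A k i)) (Finset.mem_univ i)
    nlinarith [sq_nonneg (A i i - 1)]
  have hLHS : Matrix.trace (Rᵀ * (Xᵀ * Y)) = ∑ i, A i i * Sig i i := by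
    rw [hSVD, ← Matrix.mul_assoc, ← Matrix.mul_assoc, Matrix.trace_mul_comm]
    have : Vᵀ * (Rᵀ * U * Sig) = A * Sig := by
      simp [hA, Matrix.mul_assoc]
    rw [this, Matrix.trace]
    apply Finset.sum_congr rfl
    intro i _
    simp only [Matrix.diag_apply, Matrix.mul_apply]
    rw [Finset.sum_eq_single i]
    · intro k _ hk
      rw [hSig k i hk, mul_zero]
    · simp
  rw [hLHS, hpart3]
  apply Finset.sum_le_sum
  intro i _
  calc A i i * Sig i i ≤ 1 * Sig i i :=
        mul_le_mul_of_nonneg_right (hAle i) (hSigpos i)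
    _ = Sig i i := one_mul _
end
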